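/- Let r, s > 0 with r² + s² = 1, φ > 0, and θ = (1/2) arccos((s²-r²) cosh 2φ) (assuming |(s²-r²) cosh 2φ| ≤ 1). Define a = (2/r) sinh φ cos θ, b = -(2/r) cosh φ sin θ, c = (2/s) sinh φ sin θ, d = (2/s) cosh φ cos θ, and f(x,y) = (r cos(ax+by), r sin(ax+by), s cos(cx+dy), s sin(cx+dy)). Then f maps into S³, satisfies f_xx + f_yy = -(|f_x|² + |f_y|²) f, and ⟨f_x,f_x⟩ = 4 sinh²φ, ⟨f_x,f_y⟩ = 0, ⟨f_y,f_y⟩ = 4 cosh²φ. -/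

import Mathlib

open Real

private lemma L1 (C p q x : ℝ) :
    HasDerivAt (fun t => C * Real.cos (p * t + q)) (-(C * p * Real.sin (p * x + q))) x := by
  have h : HasDerivAt (fun t : ℝ => p * t + q) p x := by
    simpa using ((hasDerivAt_id x).const_mul p).add_const q
  have := h.cos.const_mul C
  exact this.congr_deriv (by ring)

private lemma L2 (C p q x : ℝ) :
    HasDerivAt (fun t => C * Real.sin (p * t + q)) (C * p * Real.cos (p * x + q)) x := by
  have h : HasDerivAt (fun t : ℝ => p * t + q) p x := by
    simpa using ((hasDerivAt_id x).const_mul p).add_const q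
  have := h.sin.const_mul C
  exact this.congr_deriv (by ring)

private lemma L3 (C p q x : ℝ) :
    HasDerivAt (fun t => -(C * Real.sin (p * t + q))) (-(C * p * Real.cos (p * x + q))) x :=
  (L2 C p q x).neg

/-- The maps `f(x,y) = (r cos(ax+by), r sin(ax+by), s cos(cx+dy), s sin(cx+dy))` with
`r² + s² = 1`, `a = (2/r) sinh φ cos θ`, `b = -(2/r) cosh φ sin θ`, `c = (2/s) sinh φ sin θ`,
`d = (2/s) cosh φ cos θ` and `θ = (1/2) arccos((s²-r²) cosh 2φ)` map into `S³`, satisfy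
`f_xx + f_yy = -(|f_x|² + |f_y|²) f`, and have `⟨f_x,f_x⟩ = 4 sinh²φ`, `⟨f_x,f_y⟩ = 0`,
`⟨f_y,f_y⟩ = 4 cosh²φ`. -/
theorem clifford_torus_harmonic (r s φ θ a b c d : ℝ)
    (hr : r ≠ 0) (hs : s ≠ 0) (hrs : r ^ 2 + s ^ 2 = 1) (hφ : 0 < φ)
    (hbound : |(s ^ 2 - r ^ 2) * Real.cosh (2 * φ)| ≤ 1)
    (hθ : θ = (1 / 2) * Real.arccos ((s ^ 2 - r ^ 2) * Real.cosh (2 * φ)))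
    (ha : a = (2 / r) * Real.sinh φ * Real.cos θ)
    (hb : b = -(2 / r) * Real.cosh φ * Real.sin θ)
    (hc : c = (2 / s) * Real.sinh φ * Real.sin θ)
    (hd : d = (2 / s) * Real.cosh φ * Real.cos θ)
    (f : ℝ → ℝ → Fin 4 → ℝ)
    (hf : ∀ x y, f x y = ![r * Real.cos (a * x + b * y), r * Real.sin (a * x + b * y),
      s * Real.cos (c * x + d * y), s * Real.sin (c * x + d * y)]) :
    ∀ x y,
      (∑ i, f x y i ^ 2) = 1 ∧
      deriv (fun t => deriv (fun u => f u y) t) x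
          + deriv (fun t => deriv (fun u => f x u) t) y
        = -((∑ i, (deriv (fun t => f t y) x i) ^ 2)
            + (∑ i, (deriv (fun u => f x u) y i) ^ 2)) • f x y ∧
      (∑ i, deriv (fun t => f t y) x i * deriv (fun t => f t y) x i)
        = 4 * Real.sinh φ ^ 2 ∧
      (∑ i, deriv (fun t => f t y) x i * deriv (fun u => f x u) y i) = 0 ∧
      (∑ i, deriv (fun u => f x u) y i * deriv (fun u => f x u) y i)
        = 4 * Real.cosh φ ^ 2 := by
  -- algebraic preliminaries
  have hP : Real.sin θ ^ 2 + Real.cos θ ^ 2 = 1 := Real.sin_sq_add_cos_sq θ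
  have hC : Real.cosh φ ^ 2 = Real.sinh φ ^ 2 + 1 := Real.cosh_sq φ
  have hcos2θ : Real.cos (2 * θ) = (s ^ 2 - r ^ 2) * Real.cosh (2 * φ) := by
    rw [hθ, show 2 * (1 / 2 * Real.arccos ((s ^ 2 - r ^ 2) * Real.cosh (2 * φ)))
        = Real.arccos ((s ^ 2 - r ^ 2) * Real.cosh (2 * φ)) by ring]
    exact Real.cos_arccos (abs_le.mp hbound).1 (abs_le.mp hbound).2
  have hsin2 : Real.sin θ ^ 2 = r ^ 2 - (s ^ 2 - r ^ 2) * Real.sinh φ ^ 2 := by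
    have h1 : Real.cos (2 * θ) = 1 - 2 * Real.sin θ ^ 2 := by
      rw [Real.cos_two_mul]; linear_combination 2 * hP
    have h2 : Real.cosh (2 * φ) = Real.cosh φ ^ 2 + Real.sinh φ ^ 2 := Real.cosh_two_mul φ
    have hx := hcos2θ
    rw [h2] at hx
    linear_combination (1/2 : ℝ) * h1 - (1/2 : ℝ) * hx
      - ((s ^ 2 - r ^ 2) / 2) * hC - (1/2 : ℝ) * hrs
  have hcos2 : Real.cos θ ^ 2 = s ^ 2 + (s ^ 2 - r ^ 2) * Real.sinh φ ^ 2 := by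
    linear_combination hP - hsin2 - hrs
  -- products
  have hra : r ^ 2 * a ^ 2 = 4 * Real.sinh φ ^ 2 * Real.cos θ ^ 2 := by
    rw [ha]; field_simp; ring
  have hrb : r ^ 2 * b ^ 2 = 4 * Real.cosh φ ^ 2 * Real.sin θ ^ 2 := by
    rw [hb]; field_simp; ring
  have hrab : r ^ 2 * (a * b) = -(4 * Real.sinh φ * Real.cosh φ * Real.cos θ * Real.sin θ) := by
    rw [ha, hb]; field_simp; ring
  have hsc : s ^ 2 * c ^ 2 = 4 * Real.sinh φ ^ 2 * Real.sin θ ^ 2 := by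
    rw [hc]; field_simp; ring
  have hsd : s ^ 2 * d ^ 2 = 4 * Real.cosh φ ^ 2 * Real.cos θ ^ 2 := by
    rw [hd]; field_simp; ring
  have hscd : s ^ 2 * (c * d) = 4 * Real.sinh φ * Real.cosh φ * Real.sin θ * Real.cos θ := by
    rw [hc, hd]; field_simp; ring
  have h1 : r ^ 2 * a ^ 2 + s ^ 2 * c ^ 2 = 4 * Real.sinh φ ^ 2 := by
    linear_combination hra + hsc + (4 * Real.sinh φ ^ 2) * hP
  have h2 : r ^ 2 * (a * b) + s ^ 2 * (c * d) = 0 := by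
    linear_combination hrab + hscd
  have h3 : r ^ 2 * b ^ 2 + s ^ 2 * d ^ 2 = 4 * Real.cosh φ ^ 2 := by
    linear_combination hrb + hsd + (4 * Real.cosh φ ^ 2) * hP
  have h4 : a ^ 2 + b ^ 2 = 4 * Real.sinh φ ^ 2 + 4 * Real.cosh φ ^ 2 := by
    have h4' : r ^ 2 * (a ^ 2 + b ^ 2)
        = r ^ 2 * (4 * Real.sinh φ ^ 2 + 4 * Real.cosh φ ^ 2) := by
      linear_combination hra + hrb + 4 * Real.sinh φ ^ 2 * hcos2
        + 4 * Real.cosh φ ^ 2 * hsin2 - 4 * (s ^ 2 - r ^ 2) * Real.sinh φ ^ 2 * hC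
    exact mul_left_cancel₀ (pow_ne_zero 2 hr) h4'
  have h5 : c ^ 2 + d ^ 2 = 4 * Real.sinh φ ^ 2 + 4 * Real.cosh φ ^ 2 := by
    have h5' : s ^ 2 * (c ^ 2 + d ^ 2)
        = s ^ 2 * (4 * Real.sinh φ ^ 2 + 4 * Real.cosh φ ^ 2) := by
      linear_combination hsc + hsd + 4 * Real.sinh φ ^ 2 * hsin2
        + 4 * Real.cosh φ ^ 2 * hcos2 + 4 * (s ^ 2 - r ^ 2) * Real.sinh φ ^ 2 * hC
    exact mul_left_cancel₀ (pow_ne_zero 2 hs) h5'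
  intro x y
  -- first x-derivative at every point t
  have keyx : ∀ t : ℝ, HasDerivAt (fun u => f u y)
      ![-(r * a * Real.sin (a * t + b * y)), r * a * Real.cos (a * t + b * y),
        -(s * c * Real.sin (c * t + d * y)), s * c * Real.cos (c * t + d * y)] t := by
    intro t
    rw [show (fun u => f u y) = fun u => ![r * Real.cos (a * u + b * y),
        r * Real.sin (a * u + b * y), s * Real.cos (c * u + d * y),
        s * Real.sin (c * u + d * y)] from funext fun u => hf u y]
    refine hasDerivAt_pi.mpr fun i => ?_
    fin_cases i <;>
      simp only [Matrix.cons_val_zero, Matrix.cons_val_one, Matrix.head_cons,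
        Matrix.cons_val_two, Matrix.tail_cons, Matrix.cons_val_three]
    exacts [L1 r a (b * y) t, L2 r a (b * y) t, L1 s c (d * y) t, L2 s c (d * y) t]
  have keyy : ∀ t : ℝ, HasDerivAt (fun u => f x u)
      ![-(r * b * Real.sin (a * x + b * t)), r * b * Real.cos (a * x + b * t),
        -(s * d * Real.sin (c * x + d * t)), s * d * Real.cos (c * x + d * t)] t := by
    intro t
    rw [show (fun u => f x u) = fun u => ![r * Real.cos (a * x + b * u),
        r * Real.sin (a * x + b * u), s * Real.cos (c * x + d * u),
        s * Real.sin (c * x + d * u)] from funext fun u => hf x u]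
    have e0 : ∀ u : ℝ, a * x + b * u = b * u + a * x := fun u => by ring
    have e1 : ∀ u : ℝ, c * x + d * u = d * u + c * x := fun u => by ring
    refine hasDerivAt_pi.mpr fun i => ?_
    fin_cases i <;>
      simp only [Matrix.cons_val_zero, Matrix.cons_val_one, Matrix.head_cons,
        Matrix.cons_val_two, Matrix.tail_cons, Matrix.cons_val_three, e0, e1]
    exacts [L1 r b (a * x) t, L2 r b (a * x) t, L1 s d (c * x) t, L2 s d (c * x) t]
  have dx : deriv (fun t => f t y) x
      = ![-(r * a * Real.sin (a * x + b * y)), r * a * Real.cos (a * x + b * y),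
          -(s * c * Real.sin (c * x + d * y)), s * c * Real.cos (c * x + d * y)] := (keyx x).deriv
  have dy : deriv (fun u => f x u) y
      = ![-(r * b * Real.sin (a * x + b * y)), r * b * Real.cos (a * x + b * y),
          -(s * d * Real.sin (c * x + d * y)), s * d * Real.cos (c * x + d * y)] := (keyy y).deriv
  -- second derivatives
  have dxx : deriv (fun t => deriv (fun u => f u y) t) x
      = ![-(r * a * a * Real.cos (a * x + b * y)), -(r * a * a * Real.sin (a * x + b * y)),
          -(s * c * c * Real.cos (c * x + d * y)), -(s * c * c * Real.sin (c * x + d * y))] := by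
    have hfun : (fun t => deriv (fun u => f u y) t)
        = fun t => ![-(r * a * Real.sin (a * t + b * y)), r * a * Real.cos (a * t + b * y),
            -(s * c * Real.sin (c * t + d * y)), s * c * Real.cos (c * t + d * y)] :=
      funext fun t => (keyx t).deriv
    rw [hfun]
    refine HasDerivAt.deriv (hasDerivAt_pi.mpr fun i => ?_)
    fin_cases i <;>
      simp only [Matrix.cons_val_zero, Matrix.cons_val_one, Matrix.head_cons,
        Matrix.cons_val_two, Matrix.tail_cons, Matrix.cons_val_three]
    exacts [L3 (r * a) a (b * y) x, L1 (r * a) a (b * y) x,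
      L3 (s * c) c (d * y) x, L1 (s * c) c (d * y) x]
  have dyy : deriv (fun t => deriv (fun u => f x u) t) y
      = ![-(r * b * b * Real.cos (a * x + b * y)), -(r * b * b * Real.sin (a * x + b * y)),
          -(s * d * d * Real.cos (c * x + d * y)), -(s * d * d * Real.sin (c * x + d * y))] := by
    have hfun : (fun t => deriv (fun u => f x u) t)
        = fun t => ![-(r * b * Real.sin (a * x + b * t)), r * b * Real.cos (a * x + b * t),
            -(s * d * Real.sin (c * x + d * t)), s * d * Real.cos (c * x + d * t)] :=
      funext fun t => (keyy t).deriv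
    rw [hfun]
    have e0 : ∀ u : ℝ, a * x + b * u = b * u + a * x := fun u => by ring
    have e1 : ∀ u : ℝ, c * x + d * u = d * u + c * x := fun u => by ring
    have key : HasDerivAt (fun t => ![-(r * b * Real.sin (a * x + b * t)),
        r * b * Real.cos (a * x + b * t), -(s * d * Real.sin (c * x + d * t)),
        s * d * Real.cos (c * x + d * t)])
        ![-(r * b * b * Real.cos (b * y + a * x)), -(r * b * b * Real.sin (b * y + a * x)),
          -(s * d * d * Real.cos (d * y + c * x)), -(s * d * d * Real.sin (d * y + c * x))] y := by
      refine hasDerivAt_pi.mpr fun i => ?_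
      fin_cases i <;>
        simp only [Matrix.cons_val_zero, Matrix.cons_val_one, Matrix.head_cons,
          Matrix.cons_val_two, Matrix.tail_cons, Matrix.cons_val_three, e0, e1]
      exacts [L3 (r * b) b (a * x) y, L1 (r * b) b (a * x) y,
        L3 (s * d) d (c * x) y, L1 (s * d) d (c * x) y]
    rw [key.deriv, show b * y + a * x = a * x + b * y by ring,
      show d * y + c * x = c * x + d * y by ring]
  have hfxy : f x y = ![r * Real.cos (a * x + b * y), r * Real.sin (a * x + b * y),
      s * Real.cos (c * x + d * y), s * Real.sin (c * x + d * y)] := hf x y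
  have hPA : Real.sin (a * x + b * y) ^ 2 + Real.cos (a * x + b * y) ^ 2 = 1 :=
    Real.sin_sq_add_cos_sq _
  have hPB : Real.sin (c * x + d * y) ^ 2 + Real.cos (c * x + d * y) ^ 2 = 1 :=
    Real.sin_sq_add_cos_sq _
  refine ⟨?_, ?_, ?_, ?_, ?_⟩
  · rw [hfxy]
    simp [Fin.sum_univ_four]
    linear_combination r ^ 2 * hPA + s ^ 2 * hPB + hrs
  · rw [dxx, dyy, dx, dy, hfxy]
    funext i
    fin_cases i <;>
      simp [Fin.sum_univ_four, Pi.add_apply, Pi.smul_apply, smul_eq_mul]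
    · linear_combination (r * Real.cos (a * x + b * y)) * ((r ^ 2 * a ^ 2 + r ^ 2 * b ^ 2) * hPA
        + (s ^ 2 * c ^ 2 + s ^ 2 * d ^ 2) * hPB + h1 + h3 - h4)
    · linear_combination (r * Real.sin (a * x + b * y)) * ((r ^ 2 * a ^ 2 + r ^ 2 * b ^ 2) * hPA
        + (s ^ 2 * c ^ 2 + s ^ 2 * d ^ 2) * hPB + h1 + h3 - h4)
    · linear_combination (s * Real.cos (c * x + d * y)) * ((r ^ 2 * a ^ 2 + r ^ 2 * b ^ 2) * hPA
        + (s ^ 2 * c ^ 2 + s ^ 2 * d ^ 2) * hPB + h1 + h3 - h5)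
    · linear_combination (s * Real.sin (c * x + d * y)) * ((r ^ 2 * a ^ 2 + r ^ 2 * b ^ 2) * hPA
        + (s ^ 2 * c ^ 2 + s ^ 2 * d ^ 2) * hPB + h1 + h3 - h5)
  · rw [dx]
    simp [Fin.sum_univ_four]
    linear_combination (r ^ 2 * a ^ 2) * hPA + (s ^ 2 * c ^ 2) * hPB + h1
  · rw [dx, dy]
    simp [Fin.sum_univ_four]
    linear_combination (r ^ 2 * (a * b)) * hPA + (s ^ 2 * (c * d)) * hPB + h2
  · rw [dy]
    simp [Fin.sum_univ_four]
    linear_combination (r ^ 2 * b ^ 2) * hPA + (s ^ 2 * d ^ 2) * hPB + h3
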